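/- arXiv:1710.08029 — 2 statements merged into one kernel-verified Lean document; each statement's English description precedes it below -/
import Mathlib

section
/- Characterization theorem: W(P) = H_n if and only if both (i) P_{0:n} = X X^T over F_2, and (ii) X^{-1} = (P_{0:n-1}^{-T}1_b | P_{0:n-2}^{-T}1_b | ... | P_0^{-T}1_b)^T (in particular X is invertible). -/
open Matrix

/-- Binary representation of `i` as a vector in `F_2^n`, most significant bit first. -/
def bits (n : ℕ) (i : Fin (2 ^ n)) : Fin n → ZMod 2 :=
  fun k => if Nat.testBit i.val (n - 1 - k.val) then 1 else 0

/-- The vector `1_b = (0,...,0,1)ᵀ`. -/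
def oneb (n : ℕ) : Fin n → ZMod 2 := fun k => if k.val = n - 1 then 1 else 0

/-- Permutation matrix `P(Q)` of the linear permutation `π(Q)`:
entry `(j, i)` is `1` iff `j_b = Q i_b`. -/
def permMat (n : ℕ) (Q : Matrix (Fin n) (Fin n) (ZMod 2)) :
    Matrix (Fin (2 ^ n)) (Fin (2 ^ n)) ℤ :=
  Matrix.of fun j i => if bits n j = Q.mulVec (bits n i) then 1 else 0

/-- The array of butterflies `I_{2^{n-1}} ⊗ DFT_2`. -/
def butterflies (n : ℕ) : Matrix (Fin (2 ^ n)) (Fin (2 ^ n)) ℤ :=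
  Matrix.of fun j i =>
    if j.val / 2 = i.val / 2 then (if j.val % 2 = 1 ∧ i.val % 2 = 1 then -1 else 1) else 0

/-- `W(P) = P(P₀)·(I ⊗ DFT₂)·P(P₁) ⋯ (I ⊗ DFT₂)·P(Pₙ)`. -/
def W (n : ℕ) (P : ℕ → Matrix (Fin n) (Fin n) (ZMod 2)) :
    Matrix (Fin (2 ^ n)) (Fin (2 ^ n)) ℤ :=
  permMat n (P 0) * (List.ofFn fun k : Fin n => butterflies n * permMat n (P (k.val + 1))).prod

/-- `P_{i:j} = P_i P_{i+1} ⋯ P_j` (identity if `j < i`). -/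
def Pseg {n : ℕ} (P : ℕ → Matrix (Fin n) (Fin n) (ZMod 2)) (i j : ℕ) :
    Matrix (Fin n) (Fin n) (ZMod 2) :=
  ((List.range (j + 1 - i)).map fun k => P (i + k)).prod

/-- The spreading matrix `X = (P_{0:n-1}1_b | P_{0:n-2}1_b | ⋯ | P_0 1_b)`. -/
def spread (n : ℕ) (P : ℕ → Matrix (Fin n) (Fin n) (ZMod 2)) :
    Matrix (Fin n) (Fin n) (ZMod 2) :=
  Matrix.of fun r c => (Pseg P 0 (n - 1 - c.val)).mulVec (oneb n) r

/-- The matrix whose rows are `(P_{0:n-1}^{-T}1_b)ᵀ, ..., (P_0^{-T}1_b)ᵀ`. -/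
noncomputable def spreadInvRows (n : ℕ) (P : ℕ → Matrix (Fin n) (Fin n) (ZMod 2)) :
    Matrix (Fin n) (Fin n) (ZMod 2) :=
  Matrix.of fun r c => (Pseg P 0 (n - 1 - r.val))⁻¹.transpose.mulVec (oneb n) c

/-- The Hadamard matrix `H_n` with entries `(-1)^{⟨i_b, j_b⟩}`. -/
def hadamardH (n : ℕ) : Matrix (Fin (2 ^ n)) (Fin (2 ^ n)) ℤ :=
  Matrix.of fun i j => (-1) ^ (∑ k, bits n i k * bits n j k).val

/-- The cyclic bit-rotation matrix `C_n`: ones on the superdiagonal and in the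
bottom-left corner. -/
def Cmat (n : ℕ) : Matrix (Fin n) (Fin n) (ZMod 2) :=
  Matrix.of fun k l => if l.val = k.val + 1 ∨ (k.val = n - 1 ∧ l.val = 0) then 1 else 0

namespace CharAux

open Finset

/-! ### scalar facts -/

def sgn (a : ZMod 2) : ℤ := (-1) ^ a.val

lemma sgn_zero : sgn 0 = 1 := rfl
lemma sgn_add : ∀ a b : ZMod 2, sgn (a + b) = sgn a * sgn b := by decide
lemma sgn_inj : ∀ {a b : ZMod 2}, sgn a = sgn b → a = b := by decide
lemma sgn_cast2 : ∀ a : ZMod 2, ((sgn a : ℤ) : ZMod 2) = 1 := by decide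
lemma z2_mul_self : ∀ a : ZMod 2, a * a = a := by decide
lemma z2_add_self : ∀ a : ZMod 2, a + a = 0 := by decide
lemma z2_add_eq_zero : ∀ a b : ZMod 2, a + b = 0 → a = b := by decide
lemma z2_mul_succ : ∀ a : ZMod 2, a * (a + 1) = 0 := by decide
lemma z2_ne_one : ∀ a : ZMod 2, a ≠ 1 → a = 0 := by decide
lemma z2_ne : ∀ a b : ZMod 2, a ≠ b → a = b + 1 := by decide

variable {n : ℕ}

lemma vadd_self (v : Fin n → ZMod 2) : v + v = 0 := by
  funext k; exact z2_add_self _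

lemma vadd_cancel (a b : Fin n → ZMod 2) : a + (a + b) = b := by
  rw [← add_assoc, vadd_self, zero_add]

lemma sum_zmod2 {M : Type*} [AddCommMonoid M] (f : ZMod 2 → M) :
    ∑ e : ZMod 2, f e = f 0 + f 1 := by
  have h : (Finset.univ : Finset (ZMod 2)) = {0, 1} := by decide
  rw [h, Finset.sum_insert (by decide), Finset.sum_singleton]

/-! ### matrices indexed by `F₂ⁿ` -/

def PV (Q : Matrix (Fin n) (Fin n) (ZMod 2)) :
    Matrix (Fin n → ZMod 2) (Fin n → ZMod 2) ℤ :=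
  Matrix.of fun x y => if x = Q *ᵥ y then 1 else 0

def BM (u w : Fin n → ZMod 2) : Matrix (Fin n → ZMod 2) (Fin n → ZMod 2) ℤ :=
  Matrix.of fun x y => ∑ e : ZMod 2,
    (if y = x + e • u then 1 else 0) * sgn ((x ⬝ᵥ w) * (y ⬝ᵥ w))

lemma mulVec_inv_cancel {Q : Matrix (Fin n) (Fin n) (ZMod 2)} (hQ : IsUnit Q)
    (v : Fin n → ZMod 2) : Q *ᵥ (Q⁻¹ *ᵥ v) = v := by
  rw [Matrix.mulVec_mulVec, Matrix.mul_nonsing_inv _ ((Matrix.isUnit_iff_isUnit_det _).mp hQ),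
    Matrix.one_mulVec]

lemma inv_mulVec_cancel {Q : Matrix (Fin n) (Fin n) (ZMod 2)} (hQ : IsUnit Q)
    (v : Fin n → ZMod 2) : Q⁻¹ *ᵥ (Q *ᵥ v) = v := by
  rw [Matrix.mulVec_mulVec, Matrix.nonsing_inv_mul _ ((Matrix.isUnit_iff_isUnit_det _).mp hQ),
    Matrix.one_mulVec]

lemma mulVec_inj {Q : Matrix (Fin n) (Fin n) (ZMod 2)} (hQ : IsUnit Q)
    {a b : Fin n → ZMod 2} (h : Q *ᵥ a = Q *ᵥ b) : a = b := by
  have := congrArg (fun z => Q⁻¹ *ᵥ z) h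
  simpa [inv_mulVec_cancel hQ] using this

lemma mul_PV_apply (M : Matrix (Fin n → ZMod 2) (Fin n → ZMod 2) ℤ)
    (Q : Matrix (Fin n) (Fin n) (ZMod 2)) (x y : Fin n → ZMod 2) :
    (M * PV Q) x y = M x (Q *ᵥ y) := by
  simp only [Matrix.mul_apply, PV, Matrix.of_apply, mul_ite, mul_one, mul_zero]
  rw [Finset.sum_ite_eq' Finset.univ (Q *ᵥ y) (fun z => M x z)]
  simp

lemma PV_mul_apply {Q : Matrix (Fin n) (Fin n) (ZMod 2)} (hQ : IsUnit Q)
    (M : Matrix (Fin n → ZMod 2) (Fin n → ZMod 2) ℤ) (x y : Fin n → ZMod 2) :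
    (PV Q * M) x y = M (Q⁻¹ *ᵥ x) y := by
  simp only [Matrix.mul_apply, PV, Matrix.of_apply]
  have hcond : ∀ z : Fin n → ZMod 2, (x = Q *ᵥ z) = (z = Q⁻¹ *ᵥ x) := by
    intro z; apply propext; constructor
    · rintro rfl; rw [inv_mulVec_cancel hQ]
    · rintro rfl; rw [mulVec_inv_cancel hQ]
  simp only [hcond, ite_mul, one_mul, zero_mul]
  rw [Finset.sum_ite_eq' Finset.univ (Q⁻¹ *ᵥ x) (fun z => M z y)]
  simp

lemma PV_mul_PV (Q R : Matrix (Fin n) (Fin n) (ZMod 2)) :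
    PV Q * PV R = PV (Q * R) := by
  ext x y
  rw [mul_PV_apply]
  simp [PV, Matrix.mulVec_mulVec]

lemma BM_mul_apply (u w : Fin n → ZMod 2) (M : Matrix (Fin n → ZMod 2) (Fin n → ZMod 2) ℤ)
    (x y : Fin n → ZMod 2) :
    (BM u w * M) x y
      = ∑ e : ZMod 2, sgn ((x ⬝ᵥ w) * ((x + e • u) ⬝ᵥ w)) * M (x + e • u) y := by
  simp only [Matrix.mul_apply, BM, Matrix.of_apply, Finset.sum_mul]
  rw [Finset.sum_comm]
  refine Finset.sum_congr rfl fun e _ => ?_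
  have : ∀ z : Fin n → ZMod 2,
      (if z = x + e • u then (1:ℤ) else 0) * sgn ((x ⬝ᵥ w) * (z ⬝ᵥ w)) * M z y
      = if z = x + e • u then sgn ((x ⬝ᵥ w) * (z ⬝ᵥ w)) * M z y else 0 := by
    intro z; split <;> simp
  simp only [this]
  rw [Finset.sum_ite_eq' Finset.univ (x + e • u)
    (fun z => sgn ((x ⬝ᵥ w) * (z ⬝ᵥ w)) * M z y)]
  simp

lemma PV_mul_BM {Q : Matrix (Fin n) (Fin n) (ZMod 2)} (hQ : IsUnit Q)
    (v w : Fin n → ZMod 2) :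
    PV Q * BM v w = BM (Q *ᵥ v) (Q⁻¹ᵀ *ᵥ w) * PV Q := by
  ext x y
  rw [PV_mul_apply hQ, mul_PV_apply]
  simp only [BM, Matrix.of_apply]
  refine Finset.sum_congr rfl fun e _ => ?_
  have hdot1 : x ⬝ᵥ (Q⁻¹ᵀ *ᵥ w) = (Q⁻¹ *ᵥ x) ⬝ᵥ w := by
    rw [Matrix.dotProduct_mulVec, Matrix.vecMul_transpose]
  have hdot2 : (Q *ᵥ y) ⬝ᵥ (Q⁻¹ᵀ *ᵥ w) = y ⬝ᵥ w := by
    rw [Matrix.dotProduct_mulVec, Matrix.vecMul_transpose, inv_mulVec_cancel hQ]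
  have hcond : (y = Q⁻¹ *ᵥ x + e • v) = (Q *ᵥ y = x + e • (Q *ᵥ v)) := by
    apply propext; constructor
    · rintro rfl
      rw [Matrix.mulVec_add, Matrix.mulVec_smul, mulVec_inv_cancel hQ]
    · intro h
      have := congrArg (fun z => Q⁻¹ *ᵥ z) h
      simp only [inv_mulVec_cancel hQ] at this
      rw [this, Matrix.mulVec_add, Matrix.mulVec_smul, inv_mulVec_cancel hQ]
  rw [hdot1, hdot2]
  congr 1
  exact if_congr (iff_of_eq hcond) rfl rfl

/-! ### segment products -/

lemma Pseg_zero (P : ℕ → Matrix (Fin n) (Fin n) (ZMod 2)) : Pseg P 0 0 = P 0 := by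
  simp [Pseg, List.range_succ]

lemma Pseg_succ (P : ℕ → Matrix (Fin n) (Fin n) (ZMod 2)) (m : ℕ) :
    Pseg P 0 (m + 1) = Pseg P 0 m * P (m + 1) := by
  unfold Pseg
  simp [List.range_succ, mul_assoc]

lemma isUnit_Pseg {P : ℕ → Matrix (Fin n) (Fin n) (ZMod 2)} (hP : ∀ k ≤ n, IsUnit (P k))
    {m : ℕ} (hm : m ≤ n) : IsUnit (Pseg P 0 m) := by
  induction m with
  | zero => rw [Pseg_zero]; exact hP 0 (Nat.zero_le n)
  | succ m ih =>
    rw [Pseg_succ]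
    exact (ih (le_trans (Nat.le_succ m) hm)).mul (hP (m+1) hm)

def uu (P : ℕ → Matrix (Fin n) (Fin n) (ZMod 2)) (k : ℕ) : Fin n → ZMod 2 :=
  Pseg P 0 k *ᵥ oneb n

noncomputable def ww (P : ℕ → Matrix (Fin n) (Fin n) (ZMod 2)) (k : ℕ) : Fin n → ZMod 2 :=
  (Pseg P 0 k)⁻¹ᵀ *ᵥ oneb n

/-! ### products of butterflies -/

def ppB (u w : ℕ → Fin n → ZMod 2) (m : ℕ) :
    Matrix (Fin n → ZMod 2) (Fin n → ZMod 2) ℤ :=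
  ((List.range m).map fun k => BM (u k) (w k)).prod

lemma ppB_zero (u w : ℕ → Fin n → ZMod 2) : ppB u w 0 = 1 := rfl

lemma ppB_succ_left (u w : ℕ → Fin n → ZMod 2) (m : ℕ) :
    ppB u w (m + 1)
      = BM (u 0) (w 0) * ppB (fun k => u (k+1)) (fun k => w (k+1)) m := by
  rw [ppB, List.range_succ_eq_map, List.map_cons, List.map_map, List.prod_cons]
  rfl

lemma ppB_succ_right (u w : ℕ → Fin n → ZMod 2) (m : ℕ) :
    ppB u w (m + 1) = ppB u w m * BM (u m) (w m) := by
  rw [ppB, List.range_succ, List.map_append, List.prod_append]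
  simp [ppB]

/-! ### the transfer identity -/

lemma W_transfer {P : ℕ → Matrix (Fin n) (Fin n) (ZMod 2)} (hP : ∀ k ≤ n, IsUnit (P k)) :
    ∀ m, m ≤ n →
      PV (P 0) * ((List.range m).map fun k => BM (oneb n) (oneb n) * PV (P (k+1))).prod
        = ppB (uu P) (ww P) m * PV (Pseg P 0 m) := by
  intro m
  induction m with
  | zero =>
    intro _
    rw [Pseg_zero]
    simp [ppB_zero]
  | succ m ih =>
    intro hm
    have hm' : m ≤ n := by omega
    have hunit : IsUnit (Pseg P 0 m) := isUnit_Pseg hP hm'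
    rw [List.range_succ, List.map_append, List.prod_append, List.map_singleton,
      List.prod_singleton, ← mul_assoc, ih hm', ppB_succ_right]
    calc ppB (uu P) (ww P) m * PV (Pseg P 0 m) * (BM (oneb n) (oneb n) * PV (P (m+1)))
        = ppB (uu P) (ww P) m * (PV (Pseg P 0 m) * BM (oneb n) (oneb n)) * PV (P (m+1)) := by
          rw [mul_assoc, mul_assoc, mul_assoc]
      _ = ppB (uu P) (ww P) m * (BM (uu P m) (ww P m) * PV (Pseg P 0 m)) * PV (P (m+1)) := by
          rw [PV_mul_BM hunit]; rfl
      _ = ppB (uu P) (ww P) m * BM (uu P m) (ww P m) * PV (Pseg P 0 (m+1)) := by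
          rw [Pseg_succ, ← PV_mul_PV]
          rw [mul_assoc, mul_assoc, mul_assoc]

/-! ### path sums -/

def off : (ℕ → ZMod 2) → (ℕ → Fin n → ZMod 2) → ℕ → (Fin n → ZMod 2)
  | _, _, 0 => 0
  | ε, u, (m+1) => ε 0 • u 0 + off (fun k => ε (k+1)) (fun k => u (k+1)) m

def Phi : (ℕ → ZMod 2) → (ℕ → Fin n → ZMod 2) → (ℕ → Fin n → ZMod 2) →
    (Fin n → ZMod 2) → ℕ → ZMod 2
  | _, _, _, _, 0 => 0
  | ε, u, w, x, (m+1) =>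
      (x ⬝ᵥ w 0) * ((x + ε 0 • u 0) ⬝ᵥ w 0)
        + Phi (fun k => ε (k+1)) (fun k => u (k+1)) (fun k => w (k+1)) (x + ε 0 • u 0) m

lemma off_zero (ε : ℕ → ZMod 2) (u : ℕ → Fin n → ZMod 2) : off ε u 0 = 0 := rfl

lemma off_succ (ε : ℕ → ZMod 2) (u : ℕ → Fin n → ZMod 2) (m : ℕ) :
    off ε u (m+1) = ε 0 • u 0 + off (fun k => ε (k+1)) (fun k => u (k+1)) m := rfl

lemma Phi_zero (ε : ℕ → ZMod 2) (u w : ℕ → Fin n → ZMod 2) (x : Fin n → ZMod 2) :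
    Phi ε u w x 0 = 0 := rfl

lemma Phi_succ (ε : ℕ → ZMod 2) (u w : ℕ → Fin n → ZMod 2) (x : Fin n → ZMod 2) (m : ℕ) :
    Phi ε u w x (m+1)
      = (x ⬝ᵥ w 0) * ((x + ε 0 • u 0) ⬝ᵥ w 0)
        + Phi (fun k => ε (k+1)) (fun k => u (k+1)) (fun k => w (k+1)) (x + ε 0 • u 0) m := rfl

lemma off_eq (ε : ℕ → ZMod 2) (u : ℕ → Fin n → ZMod 2) (m : ℕ) :
    off ε u m = ∑ k ∈ range m, ε k • u k := by
  induction m generalizing ε u with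
  | zero => simp [off_zero]
  | succ m ih =>
    rw [off_succ, ih, Finset.sum_range_succ', add_comm]

lemma Phi_eq (ε : ℕ → ZMod 2) (u w : ℕ → Fin n → ZMod 2) (x : Fin n → ZMod 2) (m : ℕ) :
    Phi ε u w x m
      = ∑ k ∈ range m,
          ((x ⬝ᵥ w k + ∑ l ∈ range k, ε l * (u l ⬝ᵥ w k)) *
            ((x ⬝ᵥ w k + ∑ l ∈ range k, ε l * (u l ⬝ᵥ w k)) + ε k * (u k ⬝ᵥ w k))) := by
  induction m generalizing ε u w x with
  | zero => simp [Phi_zero]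
  | succ m ih =>
    rw [Phi_succ, ih, Finset.sum_range_succ'
      (fun k => ((x ⬝ᵥ w k + ∑ l ∈ range k, ε l * (u l ⬝ᵥ w k)) *
            ((x ⬝ᵥ w k + ∑ l ∈ range k, ε l * (u l ⬝ᵥ w k)) + ε k * (u k ⬝ᵥ w k)))) m]
    rw [add_comm]
    congr 1
    · refine Finset.sum_congr rfl fun k _ => ?_
      have hA : (x + ε 0 • u 0) ⬝ᵥ w (k+1) + ∑ l ∈ range k, ε (l+1) * (u (l+1) ⬝ᵥ w (k+1))
          = x ⬝ᵥ w (k+1) + ∑ l ∈ range (k+1), ε l * (u l ⬝ᵥ w (k+1)) := by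
        rw [Finset.sum_range_succ' (fun l => ε l * (u l ⬝ᵥ w (k+1))) k,
          add_dotProduct, smul_dotProduct, smul_eq_mul]
        ring
      rw [hA]
    · simp [add_dotProduct, smul_dotProduct, smul_eq_mul]

lemma off_congr {ε ε' : ℕ → ZMod 2} {u : ℕ → Fin n → ZMod 2} {m : ℕ}
    (h : ∀ k < m, ε k = ε' k) : off ε u m = off ε' u m := by
  induction m generalizing ε ε' u with
  | zero => rfl
  | succ m ih =>
    rw [off_succ, off_succ, h 0 (by omega),
      ih (fun k hk => h (k+1) (by omega))]

lemma Phi_congr {ε ε' : ℕ → ZMod 2} {u w : ℕ → Fin n → ZMod 2} {x : Fin n → ZMod 2} {m : ℕ}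
    (h : ∀ k < m, ε k = ε' k) : Phi ε u w x m = Phi ε' u w x m := by
  induction m generalizing ε ε' u w x with
  | zero => rfl
  | succ m ih =>
    rw [Phi_succ, Phi_succ, h 0 (by omega),
      ih (fun k hk => h (k+1) (by omega))]

def exd (m : ℕ) (ε : Fin m → ZMod 2) : ℕ → ZMod 2 :=
  fun k => if h : k < m then ε ⟨k, h⟩ else 0

lemma exd_cons_zero {m : ℕ} (e : ZMod 2) (ε : Fin m → ZMod 2) :
    exd (m+1) (Fin.cons e ε) 0 = e := by
  simp [exd]

lemma exd_cons_shift {m : ℕ} (e : ZMod 2) (ε : Fin m → ZMod 2) :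
    (fun k => exd (m+1) (Fin.cons e ε) (k+1)) = exd m ε := by
  funext k
  simp only [exd]
  by_cases h : k < m
  · rw [dif_pos (by omega : k + 1 < m + 1), dif_pos h]
    exact @Fin.cons_succ m (fun _ => ZMod 2) e ε ⟨k, h⟩
  · rw [dif_neg (by omega), dif_neg h]

lemma ppB_apply (u w : ℕ → Fin n → ZMod 2) (m : ℕ) (x y : Fin n → ZMod 2) :
    ppB u w m x y = ∑ ε : Fin m → ZMod 2,
      (if y = x + off (exd m ε) u m then 1 else 0) * sgn (Phi (exd m ε) u w x m) := by
  induction m generalizing u w x with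
  | zero =>
    rw [ppB_zero, Fintype.sum_unique]
    simp only [off_zero, Phi_zero, sgn_zero, mul_one, add_zero]
    rw [Matrix.one_apply]
    by_cases h : x = y
    · rw [if_pos h, if_pos h.symm]
    · rw [if_neg h, if_neg (fun hh => h hh.symm)]
  | succ m ih =>
    rw [ppB_succ_left, BM_mul_apply]
    have hsum : ∀ f : (Fin (m+1) → ZMod 2) → ℤ,
        ∑ ε : Fin (m+1) → ZMod 2, f ε
          = ∑ e : ZMod 2, ∑ ε : Fin m → ZMod 2, f (Fin.cons e ε) := by
      intro f
      rw [← Equiv.sum_comp (Fin.consEquiv fun _ => ZMod 2) f, Fintype.sum_prod_type]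
      rfl
    rw [hsum]
    refine Finset.sum_congr rfl fun e _ => ?_
    rw [ih, Finset.mul_sum]
    refine Finset.sum_congr rfl fun ε _ => ?_
    have h1 : off (exd (m+1) (Fin.cons e ε)) u (m+1)
        = e • u 0 + off (exd m ε) (fun k => u (k+1)) m := by
      rw [off_succ, exd_cons_zero, exd_cons_shift]
    have h2 : Phi (exd (m+1) (Fin.cons e ε)) u w x (m+1)
        = (x ⬝ᵥ w 0) * ((x + e • u 0) ⬝ᵥ w 0)
          + Phi (exd m ε) (fun k => u (k+1)) (fun k => w (k+1)) (x + e • u 0) m := by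
      rw [Phi_succ, exd_cons_zero, exd_cons_shift]
    rw [h1, h2, sgn_add, ← add_assoc]
    ring

/-! ### sum splitting helpers -/

lemma split3 {M : Type*} [AddCommMonoid M] (f : ℕ → M) {m N : ℕ} (h : m < N) :
    ∑ k ∈ range N, f k
      = ∑ k ∈ range m, f k + f m + ∑ k ∈ Ico (m+1) N, f k := by
  rw [← Finset.sum_range_add_sum_Ico f (show m+1 ≤ N by omega), Finset.sum_range_succ]

lemma Ico_split {M : Type*} [AddCommMonoid M] (f : ℕ → M) {a m N : ℕ}
    (h1 : a ≤ m) (h2 : m < N) :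
    ∑ k ∈ Ico a N, f k = ∑ k ∈ Ico a m, f k + f m + ∑ k ∈ Ico (m+1) N, f k := by
  rw [← Finset.sum_Ico_consecutive f h1 (show m ≤ N by omega),
    Finset.sum_eq_sum_Ico_succ_bot h2 f, add_assoc]

def dirac (m : ℕ) : ℕ → ZMod 2 := fun k => if k = m then 1 else 0

lemma dirac_self (m : ℕ) : dirac m m = 1 := by simp [dirac]

lemma dirac_ne {m k : ℕ} (h : k ≠ m) : dirac m k = 0 := by simp [dirac, h]

lemma dirac_smul_sum (v : ℕ → Fin n → ZMod 2) {m N : ℕ} (hm : m < N) :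
    ∑ k ∈ range N, dirac m k • v k = v m := by
  have h : ∀ k, dirac m k • v k = if k = m then v k else 0 := by
    intro k; by_cases h : k = m <;> simp [dirac, h]
  simp only [h]
  rw [Finset.sum_ite_eq' (range N) m v, if_pos (Finset.mem_range.mpr hm)]

lemma dirac_mul_sum (c : ℕ → ZMod 2) (m N : ℕ) :
    ∑ l ∈ range N, dirac m l * c l = if m < N then c m else 0 := by
  have h : ∀ l, dirac m l * c l = if l = m then c l else 0 := by
    intro l; by_cases h : l = m <;> simp [dirac, h]
  simp only [h]
  rw [Finset.sum_ite_eq' (range N) m c]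
  simp [Finset.mem_range]

/-! ### extraction -/

section Extract

variable (u w : ℕ → Fin n → ZMod 2) (A : Matrix (Fin n) (Fin n) (ZMod 2))

lemma ex1 (HH : ∀ (x : Fin n → ZMod 2) (ε : ℕ → ZMod 2),
      Phi ε u w x n = x ⬝ᵥ (A *ᵥ (x + off ε u n))) (x : Fin n → ZMod 2) :
    ∑ k ∈ range n, x ⬝ᵥ w k = x ⬝ᵥ (A *ᵥ x) := by
  have h := HH x (fun _ => 0)
  rw [Phi_eq, off_eq] at h
  simpa only [zero_mul, add_zero, Finset.sum_const_zero, z2_mul_self, zero_smul] using h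

lemma ex2 (HH : ∀ (x : Fin n → ZMod 2) (ε : ℕ → ZMod 2),
      Phi ε u w x n = x ⬝ᵥ (A *ᵥ (x + off ε u n)))
    (x y : Fin n → ZMod 2) : x ⬝ᵥ (A *ᵥ y) = y ⬝ᵥ (A *ᵥ x) := by
  have h := ex1 u w A HH (x + y)
  have hx := ex1 u w A HH x
  have hy := ex1 u w A HH y
  simp only [add_dotProduct, Matrix.mulVec_add, dotProduct_add,
    Finset.sum_add_distrib] at h
  rw [hx, hy] at h
  refine z2_add_eq_zero _ _ ?_
  linear_combination -h

lemma ex3 (hg : ∀ k < n, u k ⬝ᵥ w k = 1)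
    (HH : ∀ (x : Fin n → ZMod 2) (ε : ℕ → ZMod 2),
      Phi ε u w x n = x ⬝ᵥ (A *ᵥ (x + off ε u n)))
    {m : ℕ} (hm : m < n) :
    (∑ k ∈ Ico (m+1) n, u m ⬝ᵥ w k = 0) ∧ w m = A *ᵥ u m := by
  have key : ∀ x : Fin n → ZMod 2,
      ∑ k ∈ Ico (m+1) n, u m ⬝ᵥ w k = x ⬝ᵥ w m + x ⬝ᵥ (A *ᵥ u m) := by
    intro x
    have h := HH x (dirac m)
    rw [Phi_eq, off_eq, dirac_smul_sum u hm] at h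
    have hin : ∀ k, ∑ l ∈ range k, dirac m l * (u l ⬝ᵥ w k)
        = if m < k then u m ⬝ᵥ w k else 0 :=
      fun k => dirac_mul_sum (fun l => u l ⬝ᵥ w k) m k
    simp only [hin] at h
    have hsplit : ∑ k ∈ range n,
        ((x ⬝ᵥ w k + (if m < k then u m ⬝ᵥ w k else 0)) *
          ((x ⬝ᵥ w k + (if m < k then u m ⬝ᵥ w k else 0)) + dirac m k * (u k ⬝ᵥ w k)))
        = (∑ k ∈ range m, x ⬝ᵥ w k) + ((∑ k ∈ Ico (m+1) n, x ⬝ᵥ w k)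
            + (∑ k ∈ Ico (m+1) n, u m ⬝ᵥ w k)) := by
      rw [split3 _ hm]
      have e1 : ∑ k ∈ range m,
          ((x ⬝ᵥ w k + (if m < k then u m ⬝ᵥ w k else 0)) *
            ((x ⬝ᵥ w k + (if m < k then u m ⬝ᵥ w k else 0)) + dirac m k * (u k ⬝ᵥ w k)))
          = ∑ k ∈ range m, x ⬝ᵥ w k := by
        refine Finset.sum_congr rfl fun k hk => ?_
        have hk' := Finset.mem_range.mp hk
        rw [if_neg (by omega : ¬ m < k), dirac_ne (by omega : k ≠ m)]
        simp only [add_zero, zero_mul]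
        exact z2_mul_self _
      have e2 : ((x ⬝ᵥ w m + (if m < m then u m ⬝ᵥ w m else 0)) *
            ((x ⬝ᵥ w m + (if m < m then u m ⬝ᵥ w m else 0)) + dirac m m * (u m ⬝ᵥ w m)))
          = 0 := by
        rw [if_neg (lt_irrefl m), dirac_self, one_mul, hg m hm, add_zero, z2_mul_succ]
      have e3 : ∑ k ∈ Ico (m+1) n,
          ((x ⬝ᵥ w k + (if m < k then u m ⬝ᵥ w k else 0)) *
            ((x ⬝ᵥ w k + (if m < k then u m ⬝ᵥ w k else 0)) + dirac m k * (u k ⬝ᵥ w k)))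
          = ∑ k ∈ Ico (m+1) n, (x ⬝ᵥ w k + u m ⬝ᵥ w k) := by
        refine Finset.sum_congr rfl fun k hk => ?_
        have hk' := (Finset.mem_Ico.mp hk).1
        rw [if_pos (by omega : m < k), dirac_ne (by omega : k ≠ m)]
        rw [zero_mul, add_zero, z2_mul_self]
      rw [e1, e2, e3, Finset.sum_add_distrib]
      ring
    rw [hsplit, Matrix.mulVec_add, dotProduct_add] at h
    have hx := ex1 u w A HH x
    rw [split3 _ hm] at hx
    linear_combination h - hx
  have h0 := key 0
  simp only [zero_dotProduct, add_zero, zero_add] at h0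
  refine ⟨h0, ?_⟩
  funext j
  have hj := key (Pi.single j 1)
  rw [h0, single_dotProduct, single_dotProduct, one_mul, one_mul] at hj
  exact z2_add_eq_zero _ _ hj.symm

lemma ex4 (hg : ∀ k < n, u k ⬝ᵥ w k = 1)
    (HH : ∀ (x : Fin n → ZMod 2) (ε : ℕ → ZMod 2),
      Phi ε u w x n = x ⬝ᵥ (A *ᵥ (x + off ε u n)))
    {l m : ℕ} (hl : l < m) (hm : m < n) : u l ⬝ᵥ w m = 0 := by
  have hCl := (ex3 u w A hg HH (lt_trans hl hm)).1
  have hCm := (ex3 u w A hg HH hm).1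
  have h := HH 0 (fun k => dirac l k + dirac m k)
  rw [Phi_eq] at h
  have hin : ∀ k, ∑ t ∈ range k, (dirac l t + dirac m t) * (u t ⬝ᵥ w k)
      = (if l < k then u l ⬝ᵥ w k else 0) + (if m < k then u m ⬝ᵥ w k else 0) := by
    intro k
    simp only [add_mul]
    rw [Finset.sum_add_distrib, dirac_mul_sum (fun t => u t ⬝ᵥ w k) l k,
      dirac_mul_sum (fun t => u t ⬝ᵥ w k) m k]
  simp only [hin, zero_dotProduct, zero_add] at h
  have hsplit : ∑ k ∈ range n,
      (((if l < k then u l ⬝ᵥ w k else 0) + (if m < k then u m ⬝ᵥ w k else 0)) *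
        (((if l < k then u l ⬝ᵥ w k else 0) + (if m < k then u m ⬝ᵥ w k else 0))
          + (dirac l k + dirac m k) * (u k ⬝ᵥ w k)))
      = (∑ k ∈ Ico (l+1) m, u l ⬝ᵥ w k)
        + ((∑ k ∈ Ico (m+1) n, u l ⬝ᵥ w k) + (∑ k ∈ Ico (m+1) n, u m ⬝ᵥ w k)) := by
    rw [split3 _ hm, split3 _ hl]
    have e0 : ∑ k ∈ range l,
        (((if l < k then u l ⬝ᵥ w k else 0) + (if m < k then u m ⬝ᵥ w k else 0)) *
          (((if l < k then u l ⬝ᵥ w k else 0) + (if m < k then u m ⬝ᵥ w k else 0))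
            + (dirac l k + dirac m k) * (u k ⬝ᵥ w k)))
        = 0 := by
      refine Finset.sum_eq_zero fun k hk => ?_
      have hk' := Finset.mem_range.mp hk
      rw [if_neg (by omega : ¬ l < k), if_neg (by omega : ¬ m < k),
        dirac_ne (by omega : k ≠ l), dirac_ne (by omega : k ≠ m)]
      ring
    have el : (((if l < l then u l ⬝ᵥ w l else 0) + (if m < l then u m ⬝ᵥ w l else 0)) *
          (((if l < l then u l ⬝ᵥ w l else 0) + (if m < l then u m ⬝ᵥ w l else 0))
            + (dirac l l + dirac m l) * (u l ⬝ᵥ w l)))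
        = 0 := by
      rw [if_neg (lt_irrefl l), if_neg (by omega : ¬ m < l)]
      ring
    have e1 : ∑ k ∈ Ico (l+1) m,
        (((if l < k then u l ⬝ᵥ w k else 0) + (if m < k then u m ⬝ᵥ w k else 0)) *
          (((if l < k then u l ⬝ᵥ w k else 0) + (if m < k then u m ⬝ᵥ w k else 0))
            + (dirac l k + dirac m k) * (u k ⬝ᵥ w k)))
        = ∑ k ∈ Ico (l+1) m, u l ⬝ᵥ w k := by
      refine Finset.sum_congr rfl fun k hk => ?_
      have hk1 := (Finset.mem_Ico.mp hk).1
      have hk2 := (Finset.mem_Ico.mp hk).2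
      rw [if_pos (by omega : l < k), if_neg (by omega : ¬ m < k),
        dirac_ne (by omega : k ≠ l), dirac_ne (by omega : k ≠ m), add_zero, add_zero,
        zero_mul, add_zero, z2_mul_self]
    have em : (((if l < m then u l ⬝ᵥ w m else 0) + (if m < m then u m ⬝ᵥ w m else 0)) *
          (((if l < m then u l ⬝ᵥ w m else 0) + (if m < m then u m ⬝ᵥ w m else 0))
            + (dirac l m + dirac m m) * (u m ⬝ᵥ w m)))
        = 0 := by
      rw [if_pos hl, if_neg (lt_irrefl m), dirac_ne (by omega : m ≠ l), dirac_self,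
        zero_add, add_zero, hg m hm, mul_one, z2_mul_succ]
    have e2 : ∑ k ∈ Ico (m+1) n,
        (((if l < k then u l ⬝ᵥ w k else 0) + (if m < k then u m ⬝ᵥ w k else 0)) *
          (((if l < k then u l ⬝ᵥ w k else 0) + (if m < k then u m ⬝ᵥ w k else 0))
            + (dirac l k + dirac m k) * (u k ⬝ᵥ w k)))
        = (∑ k ∈ Ico (m+1) n, u l ⬝ᵥ w k) + (∑ k ∈ Ico (m+1) n, u m ⬝ᵥ w k) := by
      rw [← Finset.sum_add_distrib]
      refine Finset.sum_congr rfl fun k hk => ?_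
      have hk1 := (Finset.mem_Ico.mp hk).1
      rw [if_pos (by omega : l < k), if_pos (by omega : m < k),
        dirac_ne (by omega : k ≠ l), dirac_ne (by omega : k ≠ m), add_zero,
        zero_mul, add_zero]
      have := z2_mul_self (u l ⬝ᵥ w k + u m ⬝ᵥ w k)
      linear_combination this
    rw [e0, el, e1, em, e2]
    ring
  rw [hsplit] at h
  have hCl' : (∑ k ∈ Ico (l+1) m, u l ⬝ᵥ w k) + (u l ⬝ᵥ w m)
      + (∑ k ∈ Ico (m+1) n, u l ⬝ᵥ w k) = 0 := by
    rw [← Ico_split (fun k => u l ⬝ᵥ w k) (by omega : l + 1 ≤ m) hm]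
    exact hCl
  linear_combination hCl' - h + hCm

lemma extract (hg : ∀ k < n, u k ⬝ᵥ w k = 1)
    (HH : ∀ (x : Fin n → ZMod 2) (ε : ℕ → ZMod 2),
      Phi ε u w x n = x ⬝ᵥ (A *ᵥ (x + off ε u n))) :
    (∀ m, m < n → w m = A *ᵥ u m) ∧
      (∀ l k, l < n → k < n → u l ⬝ᵥ w k = if l = k then 1 else 0) := by
  refine ⟨fun m hm => (ex3 u w A hg HH hm).2, fun l k hl hk => ?_⟩
  rcases lt_trichotomy l k with h | h | h
  · rw [if_neg (by omega)]; exact ex4 u w A hg HH h hk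
  · subst h; rw [if_pos rfl]; exact hg l hl
  · rw [if_neg (by omega), (ex3 u w A hg HH hk).2, ex2 u w A HH,
      ← (ex3 u w A hg HH hl).2]
    exact ex4 u w A hg HH h hl

lemma Phi_delta (hδ : ∀ l k, l < n → k < n → u l ⬝ᵥ w k = if l = k then 1 else 0)
    (ε : ℕ → ZMod 2) (x : Fin n → ZMod 2) :
    Phi ε u w x n = ∑ k ∈ range n, (x ⬝ᵥ w k + ε k * (x ⬝ᵥ w k)) := by
  rw [Phi_eq]
  refine Finset.sum_congr rfl fun k hk => ?_
  have hk' : k < n := Finset.mem_range.mp hk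
  have hin : ∑ l ∈ range k, ε l * (u l ⬝ᵥ w k) = 0 := by
    refine Finset.sum_eq_zero fun l hl => ?_
    have hl' : l < k := Finset.mem_range.mp hl
    rw [hδ l k (by omega) hk', if_neg (by omega), mul_zero]
  rw [hin, add_zero, hδ k k hk' hk', if_pos rfl, mul_one]
  linear_combination z2_mul_self (x ⬝ᵥ w k)

end Extract

/-! ### the bits equivalence -/

lemma sgn_one : sgn 1 = -1 := by decide

lemma testBit_high (i : Fin (2^n)) {m : ℕ} (hm : n ≤ m) : i.val.testBit m = false :=
  Nat.testBit_lt_two_pow (lt_of_lt_of_le i.2 (Nat.pow_le_pow_right (by norm_num) hm))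

lemma bits_val (i : Fin (2^n)) (k : Fin n) :
    bits n i k = if i.val.testBit (n - 1 - k.val) then 1 else 0 := rfl

lemma bits_injective : Function.Injective (bits n) := by
  intro i j h
  apply Fin.ext
  apply Nat.eq_of_testBit_eq
  intro m
  by_cases hm : m < n
  · have hk : (n - 1 - (n - 1 - m)) = m := by omega
    have hh := congrFun h ⟨n - 1 - m, by omega⟩
    rw [bits_val, bits_val] at hh
    simp only [hk] at hh
    by_cases hb : i.val.testBit m <;> by_cases hb' : j.val.testBit m <;>
      simp [hb, hb'] at hh ⊢
  · rw [testBit_high i (by omega), testBit_high j (by omega)]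

lemma bits_bijective : Function.Bijective (bits n) := by
  rw [Fintype.bijective_iff_injective_and_card]
  refine ⟨bits_injective, ?_⟩
  simp [ZMod.card]

noncomputable def bitsEquiv (n : ℕ) : Fin (2^n) ≃ (Fin n → ZMod 2) :=
  Equiv.ofBijective _ bits_bijective

lemma bitsEquiv_symm (x : Fin n → ZMod 2) : bits n ((bitsEquiv n).symm x) = x :=
  (bitsEquiv n).apply_symm_apply x

/-! ### oneb facts -/

lemma oneb_apply_ne {k : Fin n} (h : (k:ℕ) ≠ n-1) : oneb n k = 0 := if_neg h

lemma oneb_last (hn : 0 < n) : oneb n ⟨n-1, by omega⟩ = 1 := if_pos rfl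

lemma oneb_ne_zero (hn : 0 < n) : oneb n ≠ 0 := by
  intro h
  have h2 := congrFun h ⟨n-1, by omega⟩
  rw [oneb_last hn] at h2
  exact one_ne_zero h2

lemma dot_oneb (hn : 0 < n) (x : Fin n → ZMod 2) :
    x ⬝ᵥ oneb n = x ⟨n-1, by omega⟩ := by
  have h : ∀ k : Fin n, x k * oneb n k
      = if k = (⟨n-1, by omega⟩ : Fin n) then x k else 0 := by
    intro k; by_cases hk : (k:ℕ) = n-1
    · rw [show oneb n k = 1 from if_pos hk, if_pos (Fin.ext hk), mul_one]
    · rw [oneb_apply_ne hk, if_neg (fun hh => hk (congrArg Fin.val hh)), mul_zero]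
  calc x ⬝ᵥ oneb n = ∑ k : Fin n, x k * oneb n k := rfl
    _ = ∑ k : Fin n, if k = (⟨n-1, by omega⟩ : Fin n) then x k else 0 :=
        Finset.sum_congr rfl fun k _ => h k
    _ = x ⟨n-1, by omega⟩ := by
        rw [Finset.sum_ite_eq' Finset.univ _ x]; simp

lemma off_last_cases (hn : 0 < n) {x y : Fin n → ZMod 2}
    (h : ∀ k : Fin n, (k:ℕ) ≠ n-1 → x k = y k) : y = x ∨ y = x + oneb n := by
  by_cases he : y ⟨n-1, by omega⟩ = x ⟨n-1, by omega⟩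
  · left; funext k
    by_cases hk : (k:ℕ) = n-1
    · have hkk : k = (⟨n-1, by omega⟩ : Fin n) := Fin.ext hk
      rw [hkk]; exact he
    · exact (h k hk).symm
  · right; funext k
    rw [Pi.add_apply]
    by_cases hk : (k:ℕ) = n-1
    · have hkk : k = (⟨n-1, by omega⟩ : Fin n) := Fin.ext hk
      rw [hkk, oneb_last hn]
      exact z2_ne _ _ he
    · rw [oneb_apply_ne hk, add_zero]; exact (h k hk).symm

/-! ### butterfly entries -/

lemma div2_eq_iff (hn : 0 < n) (i j : Fin (2^n)) :
    i.val / 2 = j.val / 2 ↔ ∀ k : Fin n, (k:ℕ) ≠ n-1 → bits n i k = bits n j k := by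
  constructor
  · intro h k hk
    rw [bits_val, bits_val]
    have hm : n - 1 - (k:ℕ) = (n - 1 - (k:ℕ) - 1) + 1 := by omega
    rw [hm, ← Nat.testBit_div_two, ← Nat.testBit_div_two, h]
  · intro h
    apply Nat.eq_of_testBit_eq
    intro t
    rw [Nat.testBit_div_two, Nat.testBit_div_two]
    by_cases ht : t + 1 < n
    · have hh := h ⟨n - 1 - (t+1), by omega⟩ (by show n - 1 - (t+1) ≠ n - 1; omega)
      rw [bits_val, bits_val] at hh
      have he : n - 1 - (n - 1 - (t+1)) = t+1 := by omega
      simp only [he] at hh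
      by_cases hb : i.val.testBit (t+1) <;> by_cases hb' : j.val.testBit (t+1) <;>
        simp [hb, hb'] at hh ⊢
    · rw [testBit_high i (by omega), testBit_high j (by omega)]

lemma bits_last (hn : 0 < n) (i : Fin (2^n)) :
    bits n i ⟨n-1, by omega⟩ = if i.val % 2 = 1 then 1 else 0 := by
  rw [bits_val]
  have h0 : n - 1 - ((⟨n-1, by omega⟩ : Fin n) : ℕ) = 0 := by
    show n - 1 - (n-1) = 0; omega
  rw [h0, Nat.testBit_zero]
  simp

lemma butterflies_entry (hn : 0 < n) (i j : Fin (2^n)) :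
    butterflies n i j = BM (oneb n) (oneb n) (bits n i) (bits n j) := by
  have hBM : BM (oneb n) (oneb n) (bits n i) (bits n j)
      = ((if bits n j = bits n i then (1:ℤ) else 0)
          + (if bits n j = bits n i + oneb n then 1 else 0))
          * sgn ((bits n i ⬝ᵥ oneb n) * (bits n j ⬝ᵥ oneb n)) := by
    rw [show BM (oneb n) (oneb n) (bits n i) (bits n j)
        = ∑ e : ZMod 2, (if bits n j = bits n i + e • oneb n then (1:ℤ) else 0)
            * sgn ((bits n i ⬝ᵥ oneb n) * (bits n j ⬝ᵥ oneb n)) from rfl,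
      sum_zmod2]
    rw [zero_smul, add_zero, one_smul, add_mul]
  rw [hBM, dot_oneb hn, dot_oneb hn, bits_last hn i, bits_last hn j]
  rw [show butterflies n i j = (if i.val / 2 = j.val / 2 then
      (if i.val % 2 = 1 ∧ j.val % 2 = 1 then (-1:ℤ) else 1) else 0) from rfl]
  by_cases h1 : bits n j = bits n i
  · have hij : j = i := bits_injective h1
    subst hij
    have hne : ¬ (bits n j = bits n j + oneb n) := by
      intro hh
      exact oneb_ne_zero hn (left_eq_add.mp hh)
    rw [if_pos rfl, if_pos rfl, if_neg hne, add_zero, one_mul]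
    by_cases hm : j.val % 2 = 1
    · rw [if_pos ⟨hm, hm⟩, if_pos hm, mul_one, sgn_one]
    · rw [if_neg (fun hh => hm hh.1), if_neg hm, mul_zero, sgn_zero]
  · rw [if_neg h1, zero_add]
    by_cases h2 : bits n j = bits n i + oneb n
    · have hagree : ∀ k : Fin n, (k:ℕ) ≠ n-1 → bits n i k = bits n j k := by
        intro k hk
        rw [h2, Pi.add_apply, oneb_apply_ne hk, add_zero]
      have hdiv : i.val / 2 = j.val / 2 := (div2_eq_iff hn i j).mpr hagree
      have hlast : (if j.val % 2 = 1 then (1:ZMod 2) else 0)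
          = (if i.val % 2 = 1 then 1 else 0) + 1 := by
        have := congrFun h2 ⟨n-1, by omega⟩
        rw [Pi.add_apply, bits_last hn, bits_last hn, oneb_last hn] at this
        exact this
      rw [if_pos hdiv, if_pos h2, one_mul, hlast, z2_mul_succ, sgn_zero]
      rw [if_neg]
      intro hh
      rw [if_pos hh.1, if_pos hh.2] at hlast
      exact absurd hlast (by decide)
    · rw [if_neg h2, zero_mul]
      rw [if_neg]
      intro hdiv
      rcases off_last_cases hn ((div2_eq_iff hn i j).mp hdiv) with h | h
      · exact h1 h
      · exact h2 h

/-! ### reindexing -/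

lemma ofFn_eq {β : Type*} (F : ℕ → β) (m : ℕ) :
    (List.ofFn fun k : Fin m => F k.val) = (List.range m).map F := by
  induction m with
  | zero => rfl
  | succ m ih =>
    rw [List.ofFn_succ', List.concat_eq_append, List.range_succ, List.map_append]
    congr 1

lemma reindex_permMat (Q : Matrix (Fin n) (Fin n) (ZMod 2)) :
    Matrix.reindexAlgEquiv ℤ ℤ (bitsEquiv n) (permMat n Q) = PV Q := by
  ext x y
  rw [Matrix.reindexAlgEquiv_apply, Matrix.reindex_apply, Matrix.submatrix_apply]
  simp [permMat, PV, bitsEquiv_symm]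

lemma reindex_hadamard :
    Matrix.reindexAlgEquiv ℤ ℤ (bitsEquiv n) (hadamardH n)
      = Matrix.of (fun x y : Fin n → ZMod 2 => sgn (x ⬝ᵥ y)) := by
  ext x y
  rw [Matrix.reindexAlgEquiv_apply, Matrix.reindex_apply, Matrix.submatrix_apply]
  show (-1:ℤ) ^ (∑ k, bits n ((bitsEquiv n).symm x) k * bits n ((bitsEquiv n).symm y) k).val
      = sgn (x ⬝ᵥ y)
  rw [bitsEquiv_symm, bitsEquiv_symm]
  rfl

lemma reindex_butterflies (hn : 0 < n) :
    Matrix.reindexAlgEquiv ℤ ℤ (bitsEquiv n) (butterflies n) = BM (oneb n) (oneb n) := by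
  ext x y
  rw [Matrix.reindexAlgEquiv_apply, Matrix.reindex_apply, Matrix.submatrix_apply,
    butterflies_entry hn, bitsEquiv_symm, bitsEquiv_symm]

lemma W_iff (hn : 0 < n) {P : ℕ → Matrix (Fin n) (Fin n) (ZMod 2)}
    (hP : ∀ k ≤ n, IsUnit (P k)) :
    (W n P = hadamardH n)
      ↔ ∀ x y : Fin n → ZMod 2,
          ppB (uu P) (ww P) n x y = sgn (x ⬝ᵥ ((Pseg P 0 n)⁻¹ *ᵥ y)) := by
  have hQ : IsUnit (Pseg P 0 n) := isUnit_Pseg hP le_rfl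
  have h1 : (W n P = hadamardH n)
      ↔ Matrix.reindexAlgEquiv ℤ ℤ (bitsEquiv n) (W n P)
          = Matrix.reindexAlgEquiv ℤ ℤ (bitsEquiv n) (hadamardH n) :=
    ⟨fun h => by rw [h], fun h => (Matrix.reindexAlgEquiv ℤ ℤ (bitsEquiv n)).injective h⟩
  have himg : Matrix.reindexAlgEquiv ℤ ℤ (bitsEquiv n) (W n P)
      = PV (P 0) * ((List.range n).map fun k => BM (oneb n) (oneb n) * PV (P (k+1))).prod := by
    rw [W, _root_.map_mul, reindex_permMat]
    congr 1
    rw [map_list_prod (Matrix.reindexAlgEquiv ℤ ℤ (bitsEquiv n)), List.map_ofFn]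
    have hc : ((Matrix.reindexAlgEquiv ℤ ℤ (bitsEquiv n))
          ∘ fun k : Fin n => butterflies n * permMat n (P (k.val+1)))
        = fun k : Fin n => BM (oneb n) (oneb n) * PV (P (k.val+1)) := by
      funext k
      simp only [Function.comp_apply, _root_.map_mul, reindex_butterflies hn, reindex_permMat]
    rw [hc, ofFn_eq (fun k => BM (oneb n) (oneb n) * PV (P (k+1))) n]
  rw [h1, himg, reindex_hadamard, W_transfer hP n le_rfl]
  constructor
  · intro h x y
    have he : ∀ a b, (ppB (uu P) (ww P) n * PV (Pseg P 0 n)) a b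
        = sgn (a ⬝ᵥ b) := fun a b => by rw [h]; rfl
    have h2 := he x ((Pseg P 0 n)⁻¹ *ᵥ y)
    rw [mul_PV_apply, mulVec_inv_cancel hQ] at h2
    exact h2
  · intro h
    ext a b
    rw [mul_PV_apply, Matrix.of_apply, h a (Pseg P 0 n *ᵥ b), inv_mulVec_cancel hQ]

/-! ### spread connections -/

lemma sgn_ne_zero : ∀ a : ZMod 2, sgn a ≠ 0 := by decide

lemma spread_apply (P : ℕ → Matrix (Fin n) (Fin n) (ZMod 2)) (r c : Fin n) :
    spread n P r c = uu P (n - 1 - c.val) r := rfl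

lemma spreadInvRows_apply (P : ℕ → Matrix (Fin n) (Fin n) (ZMod 2)) (r c : Fin n) :
    spreadInvRows n P r c = ww P (n - 1 - r.val) c := rfl

lemma revsum {M : Type*} [AddCommMonoid M] (f : ℕ → M) :
    ∑ c : Fin n, f (n - 1 - (c:ℕ)) = ∑ k ∈ range n, f k := by
  rw [← Fin.sum_univ_eq_sum_range]
  refine Fintype.sum_equiv Fin.revPerm _ _ fun c => ?_
  simp only [Fin.revPerm_apply, Fin.val_rev]
  congr 1
  omega

lemma off_spread (P : ℕ → Matrix (Fin n) (Fin n) (ZMod 2)) (ε : Fin n → ZMod 2) :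
    off (exd n ε) (uu P) n = spread n P *ᵥ (fun c => exd n ε (n - 1 - (c:ℕ))) := by
  rw [off_eq]
  funext r
  calc (∑ k ∈ range n, exd n ε k • uu P k) r
      = ∑ k ∈ range n, exd n ε k * uu P k r := by
        rw [Finset.sum_apply]
        exact Finset.sum_congr rfl fun k _ => rfl
    _ = ∑ c : Fin n, exd n ε (n-1-(c:ℕ)) * uu P (n-1-(c:ℕ)) r := (revsum _).symm
    _ = ∑ c : Fin n, spread n P r c * exd n ε (n-1-(c:ℕ)) :=
        Finset.sum_congr rfl fun c _ => by rw [spread_apply, mul_comm]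
    _ = (spread n P *ᵥ fun c => exd n ε (n-1-(c:ℕ))) r := rfl

lemma hg_uu_ww (P : ℕ → Matrix (Fin n) (Fin n) (ZMod 2)) (hn : 0 < n)
    (hP : ∀ k ≤ n, IsUnit (P k)) : ∀ k < n, uu P k ⬝ᵥ ww P k = 1 := by
  intro k hk
  have hu : IsUnit (Pseg P 0 k) := isUnit_Pseg hP (by omega)
  rw [uu, ww, Matrix.dotProduct_mulVec, Matrix.vecMul_transpose, inv_mulVec_cancel hu]
  rw [dot_oneb hn, oneb_last hn]

lemma delta_of_inv (P : ℕ → Matrix (Fin n) (Fin n) (ZMod 2)) (hn : 0 < n)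
    (hRS : spreadInvRows n P * spread n P = 1) :
    ∀ l k, l < n → k < n → uu P l ⬝ᵥ ww P k = if l = k then 1 else 0 := by
  intro l k hl hk
  have he : (spreadInvRows n P * spread n P) (⟨n-1-k, by omega⟩ : Fin n)
      (⟨n-1-l, by omega⟩ : Fin n)
      = (1 : Matrix (Fin n) (Fin n) (ZMod 2)) ⟨n-1-k, by omega⟩ ⟨n-1-l, by omega⟩ := by
    rw [hRS]
  rw [Matrix.mul_apply, Matrix.one_apply] at he
  have hL : (∑ j, spreadInvRows n P (⟨n-1-k, by omega⟩ : Fin n) j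
        * spread n P j (⟨n-1-l, by omega⟩ : Fin n))
      = ww P k ⬝ᵥ uu P l := by
    refine Finset.sum_congr rfl fun j _ => ?_
    rw [spreadInvRows_apply, spread_apply]
    rw [show n - 1 - ((⟨n-1-k, by omega⟩ : Fin n) : ℕ) = k by show n-1-(n-1-k) = k; omega,
      show n - 1 - ((⟨n-1-l, by omega⟩ : Fin n) : ℕ) = l by show n-1-(n-1-l) = l; omega]
  rw [hL, dotProduct_comm] at he
  rw [he]
  by_cases h : l = k
  · subst h; rw [if_pos rfl, if_pos rfl]
  · rw [if_neg (fun hh => h (by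
      have := congrArg Fin.val hh
      simp only [] at this
      omega)), if_neg h]

lemma inv_of_delta (P : ℕ → Matrix (Fin n) (Fin n) (ZMod 2)) (hn : 0 < n)
    (hδ : ∀ l k, l < n → k < n → uu P l ⬝ᵥ ww P k = if l = k then 1 else 0) :
    spreadInvRows n P * spread n P = 1 := by
  ext r c
  have hr := r.2
  have hc := c.2
  rw [Matrix.mul_apply, Matrix.one_apply]
  have hL : (∑ j, spreadInvRows n P r j * spread n P j c)
      = ww P (n-1-(r:ℕ)) ⬝ᵥ uu P (n-1-(c:ℕ)) := rfl
  rw [hL, dotProduct_comm, hδ _ _ (by omega) (by omega)]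
  by_cases h : r = c
  · subst h; rw [if_pos rfl, if_pos rfl]
  · rw [if_neg (fun hh => h (Fin.ext (by omega))), if_neg h]

lemma off_inj (P : ℕ → Matrix (Fin n) (Fin n) (ZMod 2)) (hS : IsUnit (spread n P))
    {ε ε' : Fin n → ZMod 2}
    (h : off (exd n ε) (uu P) n = off (exd n ε') (uu P) n) : ε = ε' := by
  rw [off_spread, off_spread] at h
  have h2 := mulVec_inj hS h
  funext j
  have h3 : exd n ε (n - 1 - (n - 1 - (j:ℕ))) = exd n ε' (n - 1 - (n - 1 - (j:ℕ))) :=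
    congrFun h2 ⟨n-1-(j:ℕ), by have := j.2; omega⟩
  rw [show n-1-(n-1-(j:ℕ)) = (j:ℕ) by have := j.2; omega] at h3
  simpa [exd, j.isLt] using h3

lemma ppB_collapse (P : ℕ → Matrix (Fin n) (Fin n) (ZMod 2)) (hS : IsUnit (spread n P))
    (x ε : Fin n → ZMod 2) :
    ppB (uu P) (ww P) n x (x + off (exd n ε) (uu P) n)
      = sgn (Phi (exd n ε) (uu P) (ww P) x n) := by
  rw [ppB_apply, Finset.sum_eq_single ε]
  · rw [if_pos rfl, one_mul]
  · intro ε' _ hne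
    rw [if_neg, zero_mul]
    intro hcontra
    exact hne (off_inj P hS (add_left_cancel hcontra)).symm
  · intro hmem; exact absurd (Finset.mem_univ ε) hmem

lemma off_surj_of_Hpp (P : ℕ → Matrix (Fin n) (Fin n) (ZMod 2))
    (Hpp : ∀ x y, ppB (uu P) (ww P) n x y = sgn (x ⬝ᵥ ((Pseg P 0 n)⁻¹ *ᵥ y))) :
    ∀ y, ∃ ε : Fin n → ZMod 2, off (exd n ε) (uu P) n = y := by
  intro y
  by_contra hc
  push_neg at hc
  have h0 := Hpp 0 y
  rw [ppB_apply] at h0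
  have hz : (∑ ε : Fin n → ZMod 2,
      (if y = 0 + off (exd n ε) (uu P) n then (1:ℤ) else 0)
        * sgn (Phi (exd n ε) (uu P) (ww P) 0 n)) = 0 := by
    refine Finset.sum_eq_zero fun ε _ => ?_
    rw [if_neg, zero_mul]
    rw [zero_add]
    exact fun hh => hc ε hh.symm
  rw [hz] at h0
  exact sgn_ne_zero _ h0.symm

lemma isUnit_spread_of (P : ℕ → Matrix (Fin n) (Fin n) (ZMod 2))
    (hsur : ∀ y, ∃ ε : Fin n → ZMod 2, off (exd n ε) (uu P) n = y) :
    IsUnit (spread n P) := by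
  have hSsur : Function.Surjective (fun v => spread n P *ᵥ v) := by
    intro y
    obtain ⟨ε, hε⟩ := hsur y
    refine ⟨fun c => exd n ε (n-1-(c:ℕ)), ?_⟩
    show spread n P *ᵥ (fun c => exd n ε (n-1-(c:ℕ))) = y
    rw [← off_spread]; exact hε
  rw [Matrix.isUnit_iff_isUnit_det, isUnit_iff_ne_zero]
  intro hdet
  obtain ⟨v, hv0, hv⟩ := Matrix.exists_mulVec_eq_zero_iff.mpr hdet
  have hinj : Function.Injective (fun v => spread n P *ᵥ v) :=
    Finite.injective_iff_surjective.mpr hSsur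
  apply hv0
  apply hinj
  show spread n P *ᵥ v = spread n P *ᵥ 0
  rw [Matrix.mulVec_zero, hv]

lemma off_surj_of_unit (P : ℕ → Matrix (Fin n) (Fin n) (ZMod 2)) (hn : 0 < n)
    (hS : IsUnit (spread n P)) :
    ∀ y, ∃ ε : Fin n → ZMod 2, off (exd n ε) (uu P) n = y := by
  intro y
  refine ⟨fun j => ((spread n P)⁻¹ *ᵥ y) ⟨n-1-(j:ℕ), by omega⟩, ?_⟩
  rw [off_spread]
  have hfun : (fun c : Fin n => exd n
        (fun j : Fin n => ((spread n P)⁻¹ *ᵥ y) ⟨n-1-(j:ℕ), by omega⟩) (n-1-(c:ℕ)))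
      = (spread n P)⁻¹ *ᵥ y := by
    funext c
    rw [exd, dif_pos (show n-1-(c:ℕ) < n by omega)]
    exact congrArg _ (Fin.ext (by have := c.2; simp; omega))
  rw [hfun, mulVec_inv_cancel hS]

/-! ### the two directions -/

lemma dir_forward (hn : 0 < n) {P : ℕ → Matrix (Fin n) (Fin n) (ZMod 2)}
    (hP : ∀ k ≤ n, IsUnit (P k))
    (Hpp : ∀ x y, ppB (uu P) (ww P) n x y = sgn (x ⬝ᵥ ((Pseg P 0 n)⁻¹ *ᵥ y))) :
    Pseg P 0 n = spread n P * (spread n P)ᵀ ∧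
      IsUnit (spread n P) ∧ (spread n P)⁻¹ = spreadInvRows n P := by
  have hS : IsUnit (spread n P) := isUnit_spread_of P (off_surj_of_Hpp P Hpp)
  have HH : ∀ (x : Fin n → ZMod 2) (ε : ℕ → ZMod 2),
      Phi ε (uu P) (ww P) x n
        = x ⬝ᵥ ((Pseg P 0 n)⁻¹ *ᵥ (x + off ε (uu P) n)) := by
    intro x ε
    have hagree : ∀ k < n, ε k = exd n (fun j : Fin n => ε j.val) k := by
      intro k hk; simp [exd, hk]
    rw [Phi_congr hagree, off_congr hagree]
    apply sgn_inj
    rw [← ppB_collapse P hS x _, Hpp]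
  obtain ⟨hw, hδ⟩ := extract (uu P) (ww P) (Pseg P 0 n)⁻¹ (hg_uu_ww P hn hP) HH
  have hRS : spreadInvRows n P * spread n P = 1 := inv_of_delta P hn hδ
  have hSinv : (spread n P)⁻¹ = spreadInvRows n P := Matrix.inv_eq_left_inv hRS
  refine ⟨?_, hS, hSinv⟩
  have hQu : IsUnit (Pseg P 0 n) := isUnit_Pseg hP le_rfl
  have hQS : (Pseg P 0 n)⁻¹ * spread n P = (spreadInvRows n P)ᵀ := by
    ext r c
    rw [Matrix.transpose_apply]
    have hL : ((Pseg P 0 n)⁻¹ * spread n P) r c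
        = ((Pseg P 0 n)⁻¹ *ᵥ uu P (n-1-(c:ℕ))) r := rfl
    rw [hL, ← hw (n-1-(c:ℕ)) (by have := c.2; omega)]
    rfl
  have hS2 : spread n P = Pseg P 0 n * ((spread n P)⁻¹)ᵀ := by
    rw [← hSinv] at hQS
    calc spread n P = Pseg P 0 n * ((Pseg P 0 n)⁻¹ * spread n P) := by
          rw [← mul_assoc,
            Matrix.mul_nonsing_inv _ ((Matrix.isUnit_iff_isUnit_det _).mp hQu), one_mul]
      _ = Pseg P 0 n * ((spread n P)⁻¹)ᵀ := by rw [hQS]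
  calc Pseg P 0 n
      = Pseg P 0 n * (spread n P * (spread n P)⁻¹)ᵀ := by
        rw [Matrix.mul_nonsing_inv _ ((Matrix.isUnit_iff_isUnit_det _).mp hS),
          Matrix.transpose_one, mul_one]
    _ = Pseg P 0 n * ((spread n P)⁻¹)ᵀ * (spread n P)ᵀ := by
        rw [Matrix.transpose_mul, ← mul_assoc]
    _ = spread n P * (spread n P)ᵀ := by rw [← hS2]

lemma dot_mulVec_sum (x : Fin n → ZMod 2) (A : Matrix (Fin n) (Fin n) (ZMod 2))
    (s : Finset ℕ) (v : ℕ → Fin n → ZMod 2) :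
    x ⬝ᵥ (A *ᵥ (∑ k ∈ s, v k)) = ∑ k ∈ s, x ⬝ᵥ (A *ᵥ v k) := by
  classical
  induction s using Finset.induction with
  | empty => simp [Matrix.mulVec_zero]
  | @insert a s h ih =>
    rw [Finset.sum_insert h, Finset.sum_insert h, Matrix.mulVec_add,
      dotProduct_add, ih]

lemma dir_backward (hn : 0 < n) {P : ℕ → Matrix (Fin n) (Fin n) (ZMod 2)}
    (hP : ∀ k ≤ n, IsUnit (P k))
    (h1 : Pseg P 0 n = spread n P * (spread n P)ᵀ)
    (hS : IsUnit (spread n P)) (h3 : (spread n P)⁻¹ = spreadInvRows n P) :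
    ∀ x y, ppB (uu P) (ww P) n x y = sgn (x ⬝ᵥ ((Pseg P 0 n)⁻¹ *ᵥ y)) := by
  have hRS : spreadInvRows n P * spread n P = 1 := by
    rw [← h3]
    exact Matrix.nonsing_inv_mul _ ((Matrix.isUnit_iff_isUnit_det _).mp hS)
  have hδ := delta_of_inv P hn hRS
  have hw : ∀ k, k < n → (Pseg P 0 n)⁻¹ *ᵥ uu P k = ww P k := by
    intro k hk
    rw [h1, Matrix.mul_inv_rev, ← Matrix.mulVec_mulVec]
    have hstep1 : (spread n P)⁻¹ *ᵥ uu P k = Pi.single (⟨n-1-k, by omega⟩ : Fin n) 1 := by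
      funext r
      have hr := r.2
      have hLr : ((spread n P)⁻¹ *ᵥ uu P k) r
          = ∑ j, (spread n P)⁻¹ r j * uu P k j := rfl
      rw [hLr]
      have hj : ∀ j, (spread n P)⁻¹ r j * uu P k j
          = ww P (n-1-(r:ℕ)) j * uu P k j := by
        intro j; rw [h3]; rfl
      rw [Finset.sum_congr rfl fun j _ => hj j]
      rw [show (∑ j, ww P (n-1-(r:ℕ)) j * uu P k j)
          = ww P (n-1-(r:ℕ)) ⬝ᵥ uu P k from rfl,
        dotProduct_comm, hδ k (n-1-(r:ℕ)) hk (by omega), Pi.single_apply]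
      by_cases h : (r:ℕ) = n-1-k
      · rw [if_pos (by omega), if_pos (Fin.ext h)]
      · rw [if_neg (by omega), if_neg (fun hh => h (congrArg Fin.val hh))]
    rw [hstep1, ← Matrix.transpose_nonsing_inv, Matrix.mulVec_single_one]
    funext r
    show (spread n P)⁻¹ᵀ r ⟨n-1-k, by omega⟩ = ww P k r
    rw [Matrix.transpose_apply, h3]
    show ww P (n-1-(n-1-k)) r = ww P k r
    rw [show n-1-(n-1-k) = k by omega]
  intro x y
  obtain ⟨ε, hε⟩ := off_surj_of_unit P hn hS (x + y)
  have hy : y = x + off (exd n ε) (uu P) n := by rw [hε, vadd_cancel]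
  rw [hy, ppB_collapse P hS, Phi_delta (uu P) (ww P) hδ (exd n ε) x]
  congr 1
  rw [Matrix.mulVec_add, dotProduct_add]
  have ht1 : x ⬝ᵥ ((Pseg P 0 n)⁻¹ *ᵥ x) = ∑ k ∈ range n, x ⬝ᵥ ww P k := by
    rw [h1, Matrix.mul_inv_rev, ← Matrix.mulVec_mulVec, ← Matrix.transpose_nonsing_inv,
      Matrix.dotProduct_mulVec, Matrix.vecMul_transpose]
    have hr : ∀ r : Fin n, ((spread n P)⁻¹ *ᵥ x) r = ww P (n-1-(r:ℕ)) ⬝ᵥ x := by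
      intro r
      rw [show ((spread n P)⁻¹ *ᵥ x) r = ∑ j, (spread n P)⁻¹ r j * x j from rfl]
      refine Finset.sum_congr rfl fun j _ => ?_
      rw [h3]; rfl
    calc ((spread n P)⁻¹ *ᵥ x) ⬝ᵥ ((spread n P)⁻¹ *ᵥ x)
        = ∑ r, ((spread n P)⁻¹ *ᵥ x) r * ((spread n P)⁻¹ *ᵥ x) r := rfl
      _ = ∑ r : Fin n, ww P (n-1-(r:ℕ)) ⬝ᵥ x := by
          refine Finset.sum_congr rfl fun r _ => ?_
          rw [z2_mul_self, hr r]
      _ = ∑ k ∈ range n, ww P k ⬝ᵥ x := revsum (fun k => ww P k ⬝ᵥ x)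
      _ = ∑ k ∈ range n, x ⬝ᵥ ww P k :=
          Finset.sum_congr rfl fun k _ => dotProduct_comm _ _
  have ht2 : x ⬝ᵥ ((Pseg P 0 n)⁻¹ *ᵥ off (exd n ε) (uu P) n)
      = ∑ k ∈ range n, exd n ε k * (x ⬝ᵥ ww P k) := by
    rw [off_eq, dot_mulVec_sum]
    refine Finset.sum_congr rfl fun k hk => ?_
    rw [Matrix.mulVec_smul, dotProduct_smul, smul_eq_mul,
      hw k (Finset.mem_range.mp hk)]
  rw [ht1, ht2, ← Finset.sum_add_distrib]


end CharAux

/-- Characterization theorem: `W(P) = H_n` iff `P_{0:n} = X Xᵀ` over `F_2` and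
`X` is invertible with `X⁻¹ = (P_{0:n-1}^{-T}1_b | ⋯ | P_0^{-T}1_b)ᵀ`. -/
theorem characterization (n : ℕ) (P : ℕ → Matrix (Fin n) (Fin n) (ZMod 2))
    (hP : ∀ k ≤ n, IsUnit (P k)) :
    W n P = hadamardH n ↔
      (Pseg P 0 n = spread n P * (spread n P)ᵀ ∧
        IsUnit (spread n P) ∧ (spread n P)⁻¹ = spreadInvRows n P) := by
  rcases Nat.eq_zero_or_pos n with hn | hn
  · subst hn
    have hW : W 0 P = hadamardH 0 := by
      rw [W, List.ofFn_zero, List.prod_nil, mul_one]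
      ext i j
      have hij : i = j := by
        apply Fin.ext
        have h1 := i.2
        have h2 := j.2
        norm_num at h1 h2
        omega
      subst hij
      show (if bits 0 i = (P 0) *ᵥ bits 0 i then (1:ℤ) else 0)
          = (-1:ℤ) ^ (∑ k : Fin 0, bits 0 i k * bits 0 i k).val
      rw [if_pos (funext fun k => k.elim0)]
      simp
    haveI : Subsingleton (Matrix (Fin 0) (Fin 0) (ZMod 2)) :=
      ⟨fun a b => Matrix.ext fun i _ => i.elim0⟩
    refine iff_of_true hW ⟨Subsingleton.elim _ _, ?_, Subsingleton.elim _ _⟩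
    rw [Subsingleton.elim (spread 0 P) 1]
    exact isUnit_one
  · rw [CharAux.W_iff hn hP]
    constructor
    · exact CharAux.dir_forward hn hP
    · rintro ⟨h1, h2, h3⟩
      exact CharAux.dir_backward hn hP h1 h2 h3
end

section
/- For the Pease sequence P = (I_n, C_n, C_n, ..., C_n) (with P_0 = I_n and P_k = C_n for 1 ≤ k ≤ n), the spreading matrix X equals I_n (up to the identity, since C_n^{k}1_b gives the standard basis vectors) and the conditions P_{0:n} = X X^T and the inverse-spreading condition hold; hence the Pease sequence lies in the set of DFT_2-based linear fast WHT algorithms. -/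
open Matrix

/-- The Pease sequence `(I_n, C_n, ..., C_n)`. -/
def peaseP (n : ℕ) : ℕ → Matrix (Fin n) (Fin n) (ZMod 2) :=
  fun k => if k = 0 then 1 else Cmat n

lemma mod_eq_iff {n x b : ℕ} (hn : 0 < n) (hb : b < n) (hx : x < 2 * n) :
    x % n = b ↔ (x = b ∨ x = n + b) := by
  rcases Nat.lt_or_ge x n with h | h
  · rw [Nat.mod_eq_of_lt h]; omega
  · rw [Nat.mod_eq_sub_mod h, Nat.mod_eq_of_lt (by omega)]; omega

lemma Cmat_apply {n : ℕ} (a b : Fin n) :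
    Cmat n a b = if b.val = (a.val + 1) % n then 1 else 0 := by
  have ha := a.isLt; have hb := b.isLt
  have key : (b.val = (a.val + 1) % n) ↔
      (b.val = a.val + 1 ∨ (a.val = n - 1 ∧ b.val = 0)) := by
    rw [eq_comm, mod_eq_iff (by omega) hb (by omega)]; omega
  simp [Cmat, key]

lemma Cpow_apply {n : ℕ} (k : ℕ) (a b : Fin n) :
    (Cmat n ^ k) a b = if b.val = (a.val + k) % n then 1 else 0 := by
  induction k generalizing b with
  | zero =>
    simp [Matrix.one_apply, Nat.mod_eq_of_lt a.isLt, Fin.ext_iff, eq_comm]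
  | succ k ih =>
    have hn : 0 < n := a.pos
    rw [pow_succ, Matrix.mul_apply]
    have hc : (a.val + k) % n < n := Nat.mod_lt _ hn
    rw [Finset.sum_eq_single (⟨(a.val + k) % n, hc⟩ : Fin n)]
    · rw [ih, Cmat_apply]
      simp only [if_pos rfl, one_mul]
      rw [Nat.mod_add_mod]
      simp [Nat.add_assoc]
    · intro c _ hne
      rw [ih]
      have : c.val ≠ (a.val + k) % n := fun h => hne (Fin.ext h)
      rw [if_neg this, zero_mul]
    · intro h; exact absurd (Finset.mem_univ _) h

lemma Cpow_n {n : ℕ} : Cmat n ^ n = 1 := by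
  ext a b
  rw [Cpow_apply, Matrix.one_apply]
  rw [Nat.add_mod_right, Nat.mod_eq_of_lt a.isLt]
  simp [Fin.ext_iff, eq_comm]

lemma Pseg_pease (n : ℕ) : ∀ j : ℕ, Pseg (peaseP n) 0 j = Cmat n ^ j := by
  intro j
  induction j with
  | zero => simp [Pseg, peaseP, List.range_succ]
  | succ j ih =>
    unfold Pseg at ih ⊢
    rw [show j + 1 + 1 - 0 = (j + 1) + 1 from rfl, List.range_succ,
      List.map_append, List.prod_append]
    rw [show j + 1 - 0 = j + 1 from rfl] at ih
    rw [ih]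
    simp [peaseP, pow_succ]

lemma Cpow_mulVec_oneb {n : ℕ} (r c : Fin n) :
    (Cmat n ^ (n - 1 - c.val)).mulVec (oneb n) r = if r = c then 1 else 0 := by
  have hn : 0 < n := r.pos
  have hr := r.isLt; have hc := c.isLt
  rw [Matrix.mulVec, dotProduct]
  rw [Finset.sum_eq_single (⟨n - 1, by omega⟩ : Fin n)]
  · rw [Cpow_apply]
    have key : (n - 1 = (r.val + (n - 1 - c.val)) % n) ↔ r = c := by
      rw [eq_comm, mod_eq_iff hn (by omega) (by omega), Fin.ext_iff]; omega
    simp [oneb, key]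
  · intro l _ hne
    have : l.val ≠ n - 1 := fun h => hne (Fin.ext h)
    simp [oneb, this]
  · intro h; exact absurd (Finset.mem_univ _) h

lemma spread_pease (n : ℕ) : spread n (peaseP n) = 1 := by
  ext r c
  rw [spread, Matrix.of_apply, Pseg_pease, Cpow_mulVec_oneb, Matrix.one_apply]

lemma Ct_mul_C (n : ℕ) : (Cmat n)ᵀ * Cmat n = 1 := by
  ext a b
  rw [Matrix.mul_apply, Matrix.one_apply]
  have hn : 0 < n := a.pos
  have ha := a.isLt; have hb := b.isLt
  have hd : (a.val + (n - 1)) % n < n := Nat.mod_lt _ hn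
  have hd2 : a.val + (n - 1) = (a.val + (n - 1)) % n ∨
      a.val + (n - 1) = n + (a.val + (n - 1)) % n :=
    (mod_eq_iff hn hd (by omega)).mp rfl
  rw [Finset.sum_eq_single (⟨(a.val + (n - 1)) % n, hd⟩ : Fin n)]
  · rw [Matrix.transpose_apply, Cmat_apply, Cmat_apply]
    have h1 : a.val = ((a.val + (n - 1)) % n + 1) % n := by
      rw [eq_comm, mod_eq_iff hn ha (by omega)]; omega
    have h2 : (b.val = ((a.val + (n - 1)) % n + 1) % n) ↔ a = b := by
      rw [← h1, Fin.ext_iff, eq_comm]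
    rw [if_pos h1, one_mul, if_congr h2 rfl rfl]
  · intro c _ hne
    rw [Matrix.transpose_apply, Cmat_apply]
    have hcn := c.isLt
    have : a.val ≠ (c.val + 1) % n := by
      intro h
      apply hne; apply Fin.ext
      have h3 := (mod_eq_iff hn ha (by omega)).mp h.symm
      show c.val = (a.val + (n - 1)) % n
      omega
    rw [if_neg this, zero_mul]
  · intro h; exact absurd (Finset.mem_univ _) h

lemma Ctpow_mul_Cpow (n m : ℕ) : ((Cmat n)ᵀ) ^ m * (Cmat n) ^ m = 1 := by
  induction m with
  | zero => simp
  | succ m ih =>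
    rw [pow_succ, pow_succ' (Cmat n), Matrix.mul_assoc, ← Matrix.mul_assoc ((Cmat n)ᵀ),
      Ct_mul_C, Matrix.one_mul, ih]

lemma Cpow_inv (n m : ℕ) : ((Cmat n) ^ m)⁻¹ = ((Cmat n) ^ m)ᵀ := by
  apply Matrix.inv_eq_left_inv
  rw [Matrix.transpose_pow]
  exact Ctpow_mul_Cpow n m

lemma spreadInvRows_pease (n : ℕ) : spreadInvRows n (peaseP n) = 1 := by
  ext r c
  rw [spreadInvRows, Matrix.of_apply, Pseg_pease, Cpow_inv, Matrix.transpose_transpose,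
    Cpow_mulVec_oneb, Matrix.one_apply, eq_comm]
  simp [eq_comm]

/-- LSB-indexed bit function. -/
def gbit (n : ℕ) (i : Fin (2 ^ n)) (t : ℕ) : ZMod 2 :=
  if Nat.testBit i.val t then 1 else 0

lemma gbit_cases {n : ℕ} (i : Fin (2 ^ n)) (t : ℕ) : gbit n i t = 0 ∨ gbit n i t = 1 := by
  unfold gbit; split <;> simp

lemma gbit_eq_iff_testBit {n : ℕ} (i j : Fin (2 ^ n)) (t s : ℕ) :
    gbit n i t = gbit n j s ↔ i.val.testBit t = j.val.testBit s := by
  unfold gbit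
  rcases Bool.eq_false_or_eq_true (i.val.testBit t) with h | h <;>
    rcases Bool.eq_false_or_eq_true (j.val.testBit s) with h2 | h2 <;>
      simp [h, h2]

lemma gbit_hi {n : ℕ} (i : Fin (2 ^ n)) {t : ℕ} (h : n ≤ t) : gbit n i t = 0 := by
  unfold gbit
  rw [Nat.testBit_lt_two_pow (lt_of_lt_of_le i.isLt (Nat.pow_le_pow_right (by norm_num) h))]
  simp

lemma gbit_ext {n : ℕ} {i j : Fin (2 ^ n)} (h : ∀ t, t < n → gbit n i t = gbit n j t) :
    i = j := by
  apply Fin.ext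
  apply Nat.eq_of_testBit_eq
  intro t
  rcases Nat.lt_or_ge t n with ht | ht
  · exact (gbit_eq_iff_testBit i j t t).mp (h t ht)
  · rw [Nat.testBit_lt_two_pow (lt_of_lt_of_le i.isLt (Nat.pow_le_pow_right (by norm_num) ht)),
      Nat.testBit_lt_two_pow (lt_of_lt_of_le j.isLt (Nat.pow_le_pow_right (by norm_num) ht))]

lemma bits_eq_gbit {n : ℕ} (i : Fin (2 ^ n)) (k : Fin n) :
    bits n i k = gbit n i (n - 1 - k.val) := rfl

lemma gbit_eq_bits {n : ℕ} (i : Fin (2 ^ n)) {t : ℕ} (ht : t < n) :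
    gbit n i t = bits n i ⟨n - 1 - t, by omega⟩ := by
  rw [bits_eq_gbit]
  show gbit n i t = gbit n i (n - 1 - (n - 1 - t))
  congr 1
  omega

lemma bits_injective (n : ℕ) : Function.Injective (bits n) := by
  intro i j h
  apply gbit_ext
  intro t ht
  rw [gbit_eq_bits i ht, gbit_eq_bits j ht, h]

lemma bits_bijective (n : ℕ) : Function.Bijective (bits n) := by
  rw [Fintype.bijective_iff_injective_and_card]
  refine ⟨bits_injective n, ?_⟩
  rw [Fintype.card_fin, Fintype.card_fun, ZMod.card, Fintype.card_fin]

lemma permMat_one (n : ℕ) : permMat n 1 = 1 := by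
  ext j i
  rw [permMat, Matrix.of_apply, Matrix.one_mulVec, Matrix.one_apply]
  exact if_congr ⟨fun h => bits_injective n h, fun h => by rw [h]⟩ rfl rfl

/-- `bits` as an equivalence. -/
noncomputable def bitsEquiv (n : ℕ) : Fin (2 ^ n) ≃ (Fin n → ZMod 2) :=
  Equiv.ofBijective _ (bits_bijective n)

lemma bitsEquiv_apply (n : ℕ) (i : Fin (2 ^ n)) : bitsEquiv n i = bits n i := rfl

/-- The index whose bits are the rotated bits of `i`. -/
noncomputable def rot (n : ℕ) (i : Fin (2 ^ n)) : Fin (2 ^ n) :=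
  (bitsEquiv n).symm ((Cmat n).mulVec (bits n i))

lemma bits_rot (n : ℕ) (i : Fin (2 ^ n)) :
    bits n (rot n i) = (Cmat n).mulVec (bits n i) := by
  rw [← bitsEquiv_apply, rot, Equiv.apply_symm_apply]

lemma Cmat_mulVec {n : ℕ} (v : Fin n → ZMod 2) (k : Fin n) :
    (Cmat n).mulVec v k = v ⟨(k.val + 1) % n, Nat.mod_lt _ k.pos⟩ := by
  have hn : 0 < n := k.pos
  rw [Matrix.mulVec, dotProduct]
  rw [Finset.sum_eq_single (⟨(k.val + 1) % n, Nat.mod_lt _ hn⟩ : Fin n)]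
  · rw [Cmat_apply, if_pos rfl, one_mul]
  · intro l _ hne
    rw [Cmat_apply]
    have : l.val ≠ (k.val + 1) % n := fun h => hne (Fin.ext h)
    rw [if_neg this, zero_mul]
  · intro h; exact absurd (Finset.mem_univ _) h

lemma grot_zero {n : ℕ} (hn : 0 < n) (i : Fin (2 ^ n)) :
    gbit n (rot n i) 0 = gbit n i (n - 1) := by
  rw [gbit_eq_bits _ hn, bits_rot, Cmat_mulVec, gbit_eq_bits _ (by omega : n - 1 < n)]
  congr 1
  apply Fin.ext
  show (n - 1 - 0 + 1) % n = n - 1 - (n - 1)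
  have : n - 1 - 0 + 1 = n := by omega
  rw [this, Nat.mod_self]
  omega

lemma grot_pos {n : ℕ} {t : ℕ} (h1 : 1 ≤ t) (h2 : t < n) (i : Fin (2 ^ n)) :
    gbit n (rot n i) t = gbit n i (t - 1) := by
  rw [gbit_eq_bits _ h2, bits_rot, Cmat_mulVec, gbit_eq_bits _ (by omega : t - 1 < n)]
  congr 1
  apply Fin.ext
  show (n - 1 - t + 1) % n = n - 1 - (t - 1)
  rw [Nat.mod_eq_of_lt (by omega)]
  omega

lemma mul_permC {n : ℕ} (A : Matrix (Fin (2 ^ n)) (Fin (2 ^ n)) ℤ) (j i : Fin (2 ^ n)) :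
    (A * permMat n (Cmat n)) j i = A j (rot n i) := by
  rw [Matrix.mul_apply]
  rw [Finset.sum_eq_single (rot n i)]
  · rw [permMat, Matrix.of_apply, ← bits_rot, if_pos rfl, mul_one]
  · intro m _ hne
    rw [permMat, Matrix.of_apply, ← bits_rot]
    rw [if_neg (fun h => hne (bits_injective n h)), mul_zero]
  · intro h; exact absurd (Finset.mem_univ _) h

lemma div2_eq_iff {n : ℕ} (j m : Fin (2 ^ n)) :
    j.val / 2 = m.val / 2 ↔ ∀ t, 1 ≤ t → gbit n j t = gbit n m t := by
  constructor
  · intro h t ht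
    rw [gbit_eq_iff_testBit]
    obtain ⟨s, rfl⟩ : ∃ s, t = s + 1 := ⟨t - 1, by omega⟩
    rw [Nat.testBit_succ, Nat.testBit_succ, h]
  · intro h
    apply Nat.eq_of_testBit_eq
    intro s
    rw [← Nat.testBit_succ, ← Nat.testBit_succ]
    exact (gbit_eq_iff_testBit j m (s + 1) (s + 1)).mp (h (s + 1) (by omega))

lemma mod2_eq_iff {n : ℕ} (j : Fin (2 ^ n)) : j.val % 2 = 1 ↔ gbit n j 0 = 1 := by
  unfold gbit
  rw [Nat.testBit_zero]
  rcases Nat.mod_two_eq_zero_or_one j.val with h | h <;> simp [h]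

/-- The step matrix formula. -/
lemma M_apply {n : ℕ} (j i : Fin (2 ^ n)) :
    (butterflies n * permMat n (Cmat n)) j i =
    if ∀ s, 1 ≤ s → s < n → gbit n j s = gbit n i (s - 1)
    then (-1) ^ (gbit n j 0 * gbit n i (n - 1)).val else 0 := by
  rw [mul_permC, butterflies, Matrix.of_apply]
  rcases Nat.eq_zero_or_pos n with hn | hn
  · subst hn
    have hj : j.val = 0 := by omega
    have hi : (rot 0 i).val = 0 := by have := (rot 0 i).isLt; omega
    rw [if_pos (by rw [hj, hi]), if_neg (by rw [hj]; simp), if_pos (by omega)]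
    rw [gbit_hi j (by omega)]
    simp
  · have hcond : (j.val / 2 = (rot n i).val / 2) ↔
        (∀ s, 1 ≤ s → s < n → gbit n j s = gbit n i (s - 1)) := by
      rw [div2_eq_iff]
      constructor
      · intro h s h1 h2
        rw [← grot_pos h1 h2 i]; exact h s h1
      · intro h t ht
        rcases Nat.lt_or_ge t n with h2 | h2
        · rw [grot_pos ht h2 i]; exact h t ht h2
        · rw [gbit_hi j h2, gbit_hi _ h2]
    rw [if_congr hcond rfl rfl]
    rcases Classical.em (∀ s, 1 ≤ s → s < n → gbit n j s = gbit n i (s - 1)) with hc | hc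
    · rw [if_pos hc, if_pos hc]
      have hr : ((rot n i).val % 2 = 1) ↔ gbit n i (n - 1) = 1 := by
        rw [mod2_eq_iff, grot_zero hn]
      rcases gbit_cases j 0 with h0 | h0 <;> rcases gbit_cases i (n - 1) with h1 | h1 <;>
        rw [h0, h1]
      · rw [if_neg (fun hh => by rw [hr.mp hh.2] at h1; exact one_ne_zero h1)]; simp
      · rw [if_neg (fun hh => by rw [(mod2_eq_iff j).mp hh.1] at h0; exact one_ne_zero h0)]
        simp
      · rw [if_neg (fun hh => by rw [hr.mp hh.2] at h1; exact one_ne_zero h1)]; simp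
      · rw [if_pos ⟨(mod2_eq_iff j).mpr h0, hr.mpr h1⟩]
        norm_num [ZMod.val_one]
    · rw [if_neg hc, if_neg hc]

open Classical in
/-- Partial-product invariant matrix. -/
noncomputable def Ymat (n k : ℕ) : Matrix (Fin (2 ^ n)) (Fin (2 ^ n)) ℤ :=
  Matrix.of fun j i =>
    if ∀ s, k ≤ s → s < n → gbit n j s = gbit n i (s - k)
    then (-1) ^ (∑ s ∈ Finset.range k, gbit n j s * gbit n i (n - k + s)).val else 0

lemma Ymat_zero (n : ℕ) : Ymat n 0 = 1 := by
  ext j i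
  rw [Ymat, Matrix.of_apply, Matrix.one_apply]
  have : (∀ s, 0 ≤ s → s < n → gbit n j s = gbit n i (s - 0)) ↔ j = i := by
    constructor
    · intro h; exact gbit_ext fun t ht => h t (by omega) ht
    · rintro rfl s _ _; rfl
  rw [if_congr this rfl rfl]
  simp

lemma neg_one_pow_val_add (a b : ZMod 2) :
    ((-1 : ℤ)) ^ (a + b).val = (-1 : ℤ) ^ a.val * (-1 : ℤ) ^ b.val := by
  revert a b; decide

lemma Ymat_step (n k : ℕ) (hk : k < n) :
    Ymat n k * (butterflies n * permMat n (Cmat n)) = Ymat n (k + 1) := by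
  ext j i
  rw [Matrix.mul_apply]
  have hn1 : 0 < n := by omega
  have h2n : 2 ^ n = 2 * 2 ^ (n - 1) := by
    conv_lhs => rw [show n = (n - 1) + 1 by omega, pow_succ]
    ring
  have hbound : 2 * (i.val % 2 ^ (n - 1)) + (gbit n j k).val < 2 ^ n := by
    have h1 : i.val % 2 ^ (n - 1) < 2 ^ (n - 1) := Nat.mod_lt _ (Nat.two_pow_pos _)
    have h2 : (gbit n j k).val < 2 := (gbit n j k).val_lt
    omega
  set m : Fin (2 ^ n) := ⟨2 * (i.val % 2 ^ (n - 1)) + (gbit n j k).val, hbound⟩ with hm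
  have hmod2 : m.val % 2 = (gbit n j k).val := by
    have h2 : (gbit n j k).val < 2 := (gbit n j k).val_lt
    show (2 * (i.val % 2 ^ (n - 1)) + (gbit n j k).val) % 2 = (gbit n j k).val
    omega
  have hdiv2 : m.val / 2 = i.val % 2 ^ (n - 1) := by
    have h2 : (gbit n j k).val < 2 := (gbit n j k).val_lt
    show (2 * (i.val % 2 ^ (n - 1)) + (gbit n j k).val) / 2 = i.val % 2 ^ (n - 1)
    omega
  have hm0 : gbit n m 0 = gbit n j k := by
    rcases gbit_cases j k with h | h <;> rw [h] <;> unfold gbit <;> rw [Nat.testBit_zero]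
    · have hv : m.val % 2 = 0 := by rw [hmod2, h]; decide
      simp [hv]
    · have hv : m.val % 2 = 1 := by rw [hmod2, h]; decide
      simp [hv]
  have hms : ∀ s, 1 ≤ s → gbit n m s = if s < n then gbit n i (s - 1) else 0 := by
    intro s hs
    obtain ⟨t, rfl⟩ : ∃ t, s = t + 1 := ⟨s - 1, by omega⟩
    have htb : m.val.testBit (t + 1) = (decide (t < n - 1) && i.val.testBit t) := by
      rw [Nat.testBit_succ, hdiv2, Nat.testBit_mod_two_pow]
    unfold gbit
    rw [htb]
    rcases Nat.lt_or_ge (t + 1) n with h | h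
    · rw [decide_eq_true (show t < n - 1 by omega), Bool.true_and, if_pos h]
      rfl
    · rw [decide_eq_false (show ¬t < n - 1 by omega), Bool.false_and,
        if_neg (show ¬(t + 1 < n) by omega)]
      simp
  rw [Finset.sum_eq_single m]
  · -- main term
    rw [Ymat, Matrix.of_apply, M_apply]
    have hMcond : ∀ s, 1 ≤ s → s < n → gbit n m s = gbit n i (s - 1) := by
      intro s h1 h2; rw [hms s h1, if_pos h2]
    rw [if_pos hMcond]
    have hcond : (∀ s, k ≤ s → s < n → gbit n j s = gbit n m (s - k)) ↔
        (∀ s, k + 1 ≤ s → s < n → gbit n j s = gbit n i (s - (k + 1))) := by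
      constructor
      · intro h s h1 h2
        have h3 := h s (by omega) h2
        rw [hms (s - k) (by omega), if_pos (by omega)] at h3
        rw [h3]
        exact congrArg (gbit n i) (by omega)
      · intro h s h1 h2
        rcases Nat.eq_or_lt_of_le h1 with he | hl
        · rw [← he, Nat.sub_self, hm0]
        · rw [hms (s - k) (by omega), if_pos (by omega)]
          rw [h s (by omega) h2]
          exact congrArg (gbit n i) (by omega)
    rw [Ymat, Matrix.of_apply, if_congr hcond rfl rfl]
    rcases Classical.em (∀ s, k + 1 ≤ s → s < n → gbit n j s = gbit n i (s - (k + 1)))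
      with hc | hc
    · rw [if_pos hc, if_pos hc, hm0]
      have hsum : (∑ s ∈ Finset.range k, gbit n j s * gbit n m (n - k + s)) =
          ∑ s ∈ Finset.range k, gbit n j s * gbit n i (n - (k + 1) + s) := by
        apply Finset.sum_congr rfl
        intro s hs
        rw [Finset.mem_range] at hs
        rw [hms (n - k + s) (by omega), if_pos (by omega)]
        congr 2
        omega
      rw [hsum, Finset.sum_range_succ, show n - (k + 1) + k = n - 1 by omega,
        neg_one_pow_val_add]
    · rw [if_neg hc, if_neg hc, zero_mul]
  · -- other terms vanish
    intro m' _ hne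
    rw [Ymat, Matrix.of_apply, M_apply]
    rcases Classical.em (∀ s, k ≤ s → s < n → gbit n j s = gbit n m' (s - k)) with h1 | h1
    · rcases Classical.em (∀ s, 1 ≤ s → s < n → gbit n m' s = gbit n i (s - 1)) with h2 | h2
      · exfalso
        apply hne
        apply gbit_ext
        intro t ht
        rcases Nat.eq_zero_or_pos t with rfl | htp
        · have h0' := h1 k (le_refl k) hk
          rw [Nat.sub_self] at h0'
          exact h0'.symm.trans hm0.symm
        · rw [h2 t htp ht, hms t htp, if_pos ht]
      · rw [if_neg h2, mul_zero]
    · rw [if_neg h1, zero_mul]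
  · intro h; exact absurd (Finset.mem_univ _) h

lemma Mpow_eq_Ymat (n : ℕ) : ∀ k, k ≤ n →
    (butterflies n * permMat n (Cmat n)) ^ k = Ymat n k := by
  intro k
  induction k with
  | zero => intro _; rw [pow_zero, Ymat_zero]
  | succ k ih =>
    intro h
    rw [pow_succ, ih (by omega), Ymat_step n k (by omega)]

lemma Ymat_n (n : ℕ) : Ymat n n = hadamardH n := by
  ext j i
  rw [Ymat, Matrix.of_apply, hadamardH, Matrix.of_apply]
  rw [if_pos (fun s h1 h2 => absurd (lt_of_le_of_lt h1 h2) (lt_irrefl _))]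
  have hsum : (∑ s ∈ Finset.range n, gbit n j s * gbit n i (n - n + s)) =
      ∑ k : Fin n, bits n j k * bits n i k := by
    have h1 : ∀ s ∈ Finset.range n,
        gbit n j s * gbit n i (n - n + s) = gbit n j s * gbit n i s := by
      intro s _
      rw [Nat.sub_self, Nat.zero_add]
    rw [Finset.sum_congr rfl h1,
      ← Finset.sum_range_reflect (fun s => gbit n j s * gbit n i s) n]
    exact (Fin.sum_univ_eq_sum_range
      (fun t => gbit n j (n - 1 - t) * gbit n i (n - 1 - t)) n).symm
  rw [hsum]

lemma W_pease (n : ℕ) : W n (peaseP n) = hadamardH n := by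
  rw [W]
  have h0 : peaseP n 0 = 1 := by simp [peaseP]
  have hk : ∀ k : Fin n, peaseP n (k.val + 1) = Cmat n := by intro k; simp [peaseP]
  rw [h0, permMat_one, Matrix.one_mul]
  have : (List.ofFn fun k : Fin n => butterflies n * permMat n (peaseP n (k.val + 1))) =
      List.replicate n (butterflies n * permMat n (Cmat n)) := by
    rw [show (fun k : Fin n => butterflies n * permMat n (peaseP n (k.val + 1))) =
      (fun _ : Fin n => butterflies n * permMat n (Cmat n)) from funext fun k => by rw [hk k]]
    exact List.ofFn_const n _
  rw [this, List.prod_replicate, Mpow_eq_Ymat n n (le_refl n), Ymat_n]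


/-- For the Pease sequence, the spreading matrix equals `I_n`, both conditions of the
characterization theorem hold, and hence `W(P) = H_n`. -/
theorem pease_in_P (n : ℕ) :
    spread n (peaseP n) = 1 ∧
    Pseg (peaseP n) 0 n = spread n (peaseP n) * (spread n (peaseP n))ᵀ ∧
    IsUnit (spread n (peaseP n)) ∧
    (spread n (peaseP n))⁻¹ = spreadInvRows n (peaseP n) ∧
    W n (peaseP n) = hadamardH n := by
  refine ⟨spread_pease n, ?_, ?_, ?_, W_pease n⟩
  · rw [spread_pease, Pseg_pease, Cpow_n]
    simp
  · rw [spread_pease]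
    exact isUnit_one
  · rw [spread_pease, spreadInvRows_pease, inv_one]
end
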